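/- Let N ≥ 3, let M be an integer with 1 ≤ M < N/2, and let d_1,…,d_M be real weights with d_j ≥ 0 for all j and d_1 > 0. Let L be the N×N symmetric circulant graph Laplacian with diagonal entries ∑_{j=1}^M 2d_j and entry −d_j at positions (i, i±j mod N) for 1 ≤ j ≤ M (all other entries 0), and let L_C be the simple-cycle Laplacian (circulant with diagonal 2 and entries −1 at offsets ±1 mod N). Define P as the N×N symmetric circulant matrix whose first row has entry ∑_{i=1}^M i·d_i at position 0, entry ∑_{i=k+1}^M (i−k)·d_i at positions k and N−k for 1 ≤ k ≤ M−1, and 0 elsewhere. Then L = P·L_C and P is positive definite. -/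

import Mathlib

open Matrix Finset

private lemma sumIndLt (c t : ℕ) :
    ∑ r ∈ Finset.range t, (if r < c then (1:ℝ) else 0) = ((min c t : ℕ) : ℝ) := by
  induction t with
  | zero => simp
  | succ t ih =>
    rw [Finset.sum_range_succ, ih]
    rcases le_or_gt (t+1) c with h | h
    · rw [if_pos (by omega)]
      have h1 : min c t = t := by omega
      have h2 : min c (t+1) = t+1 := by omega
      rw [h1, h2]; push_cast; ring
    · rw [if_neg (by omega)]
      have h1 : min c (t+1) = min c t := by omega
      rw [h1, add_zero]

private lemma sumIndGe (c t : ℕ) :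
    ∑ r ∈ Finset.range t, (if c ≤ r then (1:ℝ) else 0) = ((t - c : ℕ) : ℝ) := by
  induction t with
  | zero => simp
  | succ t ih =>
    rw [Finset.sum_range_succ, ih]
    rcases le_or_gt c t with h | h
    · rw [if_pos h]
      have h1 : (t + 1 - c) = (t - c) + 1 := by omega
      rw [h1]; push_cast; ring
    · rw [if_neg (by omega)]
      have h1 : t + 1 - c = t - c := by omega
      rw [h1, add_zero]

private lemma modsub {N : ℕ} (a b : ℕ) (ha : a < N) (hb : b < N) :
    (a + N - b) % N = if b ≤ a then a - b else a + N - b := by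
  split_ifs with h
  · have he : a + N - b = (a - b) + N := by omega
    rw [he, Nat.add_mod_right, Nat.mod_eq_of_lt (by omega)]
  · exact Nat.mod_eq_of_lt (by omega)

private lemma countLem {N M : ℕ} (hM2 : 2*M < N) (t a : ℕ) (htM : t ≤ M) (ha : a < N) :
    ∑ r ∈ Finset.range t, (if (r + a) % N < t then (1:ℝ) else 0)
      = ((t - min a (N - a) : ℕ) : ℝ) := by
  rcases le_or_gt (a + t) N with hA | hB
  · have h1 : ∀ r ∈ Finset.range t, (if (r + a) % N < t then (1:ℝ) else 0)
        = (if r < t - a then (1:ℝ) else 0) := by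
      intro r hr
      rw [Finset.mem_range] at hr
      rw [Nat.mod_eq_of_lt (by omega)]
      exact if_congr (by omega) rfl rfl
    rw [Finset.sum_congr rfl h1, sumIndLt]
    congr 1
    omega
  · have h1 : ∀ r ∈ Finset.range t, (if (r + a) % N < t then (1:ℝ) else 0)
        = (if N - a ≤ r then (1:ℝ) else 0) := by
      intro r hr
      rw [Finset.mem_range] at hr
      rcases le_or_gt (N - a) r with h | h
      · have he : r + a = (r + a - N) + N := by omega
        rw [he, Nat.add_mod_right, Nat.mod_eq_of_lt (by omega), if_pos (by omega), if_pos h]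
      · rw [Nat.mod_eq_of_lt (by omega), if_neg (by omega), if_neg (by omega)]
    rw [Finset.sum_congr rfl h1, sumIndGe]
    congr 1
    omega

private def qq (M : ℕ) (d : ℕ → ℝ) (k : ℕ) : ℝ :=
  ∑ t ∈ Finset.Icc (k + 1) M, ((t : ℝ) - (k : ℝ)) * d t

private lemma qq_def (M : ℕ) (d : ℕ → ℝ) (k : ℕ) :
    qq M d k = ∑ t ∈ Finset.Icc (k + 1) M, ((t : ℝ) - (k : ℝ)) * d t := rfl

private lemma qzero (M : ℕ) (d : ℕ → ℝ) (k : ℕ) (h : M ≤ k) : qq M d k = 0 := by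
  rw [qq_def, Finset.Icc_eq_empty (by omega), Finset.sum_empty]

private lemma qstep (M : ℕ) (d : ℕ → ℝ) (k : ℕ) :
    qq M d k - qq M d (k + 1) = ∑ t ∈ Finset.Icc (k + 1) M, d t := by
  have h2 : qq M d (k + 1) = ∑ t ∈ Finset.Icc (k + 1) M, ((t : ℝ) - ((k : ℝ) + 1)) * d t := by
    rw [qq_def]
    rcases le_or_gt (k + 1) M with h | h
    · have hins : Finset.Icc (k + 1) M = insert (k + 1) (Finset.Icc (k + 2) M) := by
        ext x; simp only [Finset.mem_Icc, Finset.mem_insert]; omega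
      rw [hins, Finset.sum_insert (by simp only [Finset.mem_Icc]; omega)]
      have : ∑ t ∈ Finset.Icc (k + 1 + 1) M, ((t : ℝ) - ((k : ℕ) + 1 : ℕ)) * d t
          = ∑ t ∈ Finset.Icc (k + 2) M, ((t : ℝ) - ((k : ℝ) + 1)) * d t := by
        apply Finset.sum_congr (by norm_num)
        intro t _; push_cast; ring
      rw [this]
      push_cast
      ring
    · rw [Finset.Icc_eq_empty (by omega), Finset.Icc_eq_empty (by omega)]
      simp
  rw [h2, qq_def, ← Finset.sum_sub_distrib]
  apply Finset.sum_congr rfl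
  intro t _
  ring

private lemma qsecond (M : ℕ) (d : ℕ → ℝ) (k : ℕ) (hk1 : 1 ≤ k) (hkM : k ≤ M) :
    qq M d (k - 1) - 2 * qq M d k + qq M d (k + 1) = d k := by
  have h1 := qstep M d (k - 1)
  have e : k - 1 + 1 = k := by omega
  rw [e] at h1
  have h2 := qstep M d k
  have h3 : ∑ t ∈ Finset.Icc k M, d t = d k + ∑ t ∈ Finset.Icc (k + 1) M, d t := by
    have hins : Finset.Icc k M = insert k (Finset.Icc (k + 1) M) := by
      ext x; simp only [Finset.mem_Icc, Finset.mem_insert]; omega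
    rw [hins, Finset.sum_insert (by simp only [Finset.mem_Icc]; omega)]
  rw [h3] at h1
  linarith

private lemma qdiag (M : ℕ) (d : ℕ → ℝ) :
    qq M d 0 = ∑ t ∈ Finset.Icc 1 M, (t : ℝ) * d t := by
  rw [qq_def]
  apply Finset.sum_congr (by norm_num)
  intro t _
  push_cast
  ring

private lemma psd_smul {n : Type*} [Fintype n] {A : Matrix n n ℝ} (hA : A.PosSemidef)
    {c : ℝ} (hc : 0 ≤ c) : (c • A).PosSemidef := by
  refine ⟨?_, fun x => ?_⟩
  · have h := hA.1
    simp only [Matrix.IsHermitian, Matrix.conjTranspose_smul, star_trivial] at h ⊢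
    rw [h]
  · exact (hA.smul hc).2 x

private lemma psd_sum {n : Type*} [Fintype n] (s : Finset ℕ) (f : ℕ → Matrix n n ℝ)
    (h : ∀ t ∈ s, (f t).PosSemidef) : (∑ t ∈ s, f t).PosSemidef := by
  classical
  induction s using Finset.induction with
  | empty => simpa using Matrix.PosSemidef.zero
  | insert _ _ hx ih =>
    rw [Finset.sum_insert hx]
    exact (h _ (Finset.mem_insert_self _ _)).add (ih fun t ht => h t (Finset.mem_insert_of_mem ht))
set_option maxHeartbeats 2000000 in
theorem circulant_laplacian_decomposition
    (N M : ℕ) (hN : 3 ≤ N) (hM1 : 1 ≤ M) (hM2 : 2 * M < N)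
    (d : ℕ → ℝ) (hd : ∀ j ∈ Finset.Icc 1 M, 0 ≤ d j) (hd1 : 0 < d 1)
    (L LC P : Matrix (Fin N) (Fin N) ℝ)
    (hL : ∀ i j, L i j =
      if i = j then ∑ t ∈ Finset.Icc 1 M, 2 * d t
      else if (j.val + N - i.val) % N ≤ M then -d ((j.val + N - i.val) % N)
      else if (i.val + N - j.val) % N ≤ M then -d ((i.val + N - j.val) % N)
      else 0)
    (hLC : ∀ i j, LC i j =
      if i = j then 2
      else if j.val = (i.val + 1) % N ∨ i.val = (j.val + 1) % N then -1 else 0)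
    (hP : ∀ i j, P i j =
      if i = j then ∑ t ∈ Finset.Icc 1 M, (t : ℝ) * d t
      else if (j.val + N - i.val) % N ≤ M - 1 then
        ∑ t ∈ Finset.Icc ((j.val + N - i.val) % N + 1) M,
          ((t : ℝ) - (((j.val + N - i.val) % N : ℕ) : ℝ)) * d t
      else if (i.val + N - j.val) % N ≤ M - 1 then
        ∑ t ∈ Finset.Icc ((i.val + N - j.val) % N + 1) M,
          ((t : ℝ) - (((i.val + N - j.val) % N : ℕ) : ℝ)) * d t
      else 0) :
    L = P * LC ∧ P.PosDef := by
  haveI : NeZero N := ⟨by omega⟩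
  have h0v : (0 : Fin N).val = 0 := rfl
  have hv1 : (1 : Fin N).val = 1 := by rw [Fin.val_one']; exact Nat.mod_eq_of_lt (by omega)
  have hsub : ∀ i j : Fin N, (i - j).val = (i.val + N - j.val) % N := by
    intro i j
    rw [Fin.sub_def]
    simp only []
    congr 1
    omega
  have hvm1 : (-1 : Fin N).val = N - 1 := by
    have h : (-1 : Fin N) = 0 - 1 := by rw [zero_sub]
    rw [h, hsub 0 1, hv1, h0v, Nat.mod_eq_of_lt (by omega)]
    omega
  set vP : Fin N → ℝ := fun k => qq M d (min k.val (N - k.val)) with hvP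
  set vL : Fin N → ℝ := fun k =>
    if k.val = 0 then (∑ t ∈ Finset.Icc 1 M, 2 * d t)
    else if k.val ≤ M then -d k.val
    else if N - k.val ≤ M then -d (N - k.val) else 0 with hvL
  set vLC : Fin N → ℝ := fun k =>
    if k.val = 0 then (2:ℝ) else if k.val = 1 then -1 else if k.val = N - 1 then -1 else 0
    with hvLC
  have hPgen : ∀ x : Fin N, vP x = qq M d (min x.val (N - x.val)) := fun x => by
    simp only [hvP]
  -- P is the circulant of vP
  have hPc : P = Matrix.circulant vP := by
    ext i j
    rw [hP, Matrix.circulant_apply]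
    have hi := i.isLt
    have hj := j.isLt
    have hA := modsub (N := N) j.val i.val hj hi
    have hB := modsub (N := N) i.val j.val hi hj
    simp only [hvP]
    rw [hsub i j]
    by_cases hij : i = j
    · have hv : i.val = j.val := by rw [hij]
      have h0 : (i.val + N - j.val) % N = 0 := by rw [hB]; split_ifs <;> omega
      rw [if_pos hij, h0]
      have hm0 : min 0 (N - 0) = 0 := by omega
      rw [hm0, qdiag]
    · have hvne : i.val ≠ j.val := fun h => hij (Fin.ext h)
      have hab : (j.val + N - i.val) % N + (i.val + N - j.val) % N = N := by
        rw [hA, hB]; split_ifs <;> omega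
      have ha0 : (j.val + N - i.val) % N ≠ 0 := by rw [hA]; split_ifs <;> omega
      have hb0 : (i.val + N - j.val) % N ≠ 0 := by rw [hB]; split_ifs <;> omega
      rw [if_neg hij]
      have hNb : N - (i.val + N - j.val) % N = (j.val + N - i.val) % N := by omega
      rw [hNb]
      by_cases h1 : (j.val + N - i.val) % N ≤ M - 1
      · rw [if_pos h1]
        have hmin : min ((i.val + N - j.val) % N) ((j.val + N - i.val) % N)
            = (j.val + N - i.val) % N := by omega
        rw [hmin, qq_def]
      · rw [if_neg h1]
        by_cases h2 : (i.val + N - j.val) % N ≤ M - 1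
        · rw [if_pos h2]
          have hmin : min ((i.val + N - j.val) % N) ((j.val + N - i.val) % N)
              = (i.val + N - j.val) % N := by omega
          rw [hmin, qq_def]
        · rw [if_neg h2, qzero M d _ (by omega)]
  -- L is the circulant of vL
  have hLc : L = Matrix.circulant vL := by
    ext i j
    rw [hL, Matrix.circulant_apply]
    have hi := i.isLt
    have hj := j.isLt
    have hA := modsub (N := N) j.val i.val hj hi
    have hB := modsub (N := N) i.val j.val hi hj
    simp only [hvL]
    rw [hsub i j]
    by_cases hij : i = j
    · have hv : i.val = j.val := by rw [hij]
      have h0 : (i.val + N - j.val) % N = 0 := by rw [hB]; split_ifs <;> omega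
      rw [if_pos hij, h0, if_pos rfl]
    · have hvne : i.val ≠ j.val := fun h => hij (Fin.ext h)
      have hab : (j.val + N - i.val) % N + (i.val + N - j.val) % N = N := by
        rw [hA, hB]; split_ifs <;> omega
      have ha0 : (j.val + N - i.val) % N ≠ 0 := by rw [hA]; split_ifs <;> omega
      have hb0 : (i.val + N - j.val) % N ≠ 0 := by rw [hB]; split_ifs <;> omega
      rw [if_neg hij, if_neg hb0]
      have hNb : N - (i.val + N - j.val) % N = (j.val + N - i.val) % N := by omega
      rw [hNb]
      by_cases h1 : (j.val + N - i.val) % N ≤ M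
      · rw [if_pos h1, if_neg (show ¬ (i.val + N - j.val) % N ≤ M by omega), if_pos h1]
      · rw [if_neg h1]
        by_cases h2 : (i.val + N - j.val) % N ≤ M
        · rw [if_pos h2, if_pos h2]
        · rw [if_neg h2, if_neg h2, if_neg h1]
  -- LC is the circulant of vLC
  have hLCc : LC = Matrix.circulant vLC := by
    ext i j
    rw [hLC, Matrix.circulant_apply]
    have hi := i.isLt
    have hj := j.isLt
    have hB := modsub (N := N) i.val j.val hi hj
    have hm1 : (i.val + 1) % N = if i.val + 1 = N then 0 else i.val + 1 := by
      split_ifs with h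
      · rw [h, Nat.mod_self]
      · exact Nat.mod_eq_of_lt (by omega)
    have hm2 : (j.val + 1) % N = if j.val + 1 = N then 0 else j.val + 1 := by
      split_ifs with h
      · rw [h, Nat.mod_self]
      · exact Nat.mod_eq_of_lt (by omega)
    simp only [hvLC]
    rw [hsub i j, hB, hm1, hm2]
    by_cases hij : i = j
    · have hv : i.val = j.val := by rw [hij]
      rw [if_pos hij]
      split_ifs <;> first | rfl | (exfalso; omega)
    · have hvne : i.val ≠ j.val := fun h => hij (Fin.ext h)
      rw [if_neg hij]
      split_ifs <;> first | rfl | (exfalso; omega)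
  -- the key second-difference identity
  have hkey : ∀ k : Fin N, vL k = 2 * vP k + -vP (k - 1) + -vP (k + 1) := by
    intro k
    have hk := k.isLt
    have hk1 : (k + 1).val = (k.val + 1) % N := by
      rw [Fin.add_def]
      simp only []
      rw [hv1]
    have hkm1 : (k - 1).val = (k.val + N - 1) % N := by rw [hsub k 1, hv1]
    have hmod := modsub (N := N) k.val 1 hk (by omega)
    have hp1 : (k.val + 1) % N = if k.val + 1 = N then 0 else k.val + 1 := by
      split_ifs with h
      · rw [h, Nat.mod_self]
      · exact Nat.mod_eq_of_lt (by omega)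
    by_cases c0 : k.val = 0
    · have e1 : vP k = qq M d 0 := by rw [hPgen]; congr 1; omega
      have e2 : vP (k - 1) = qq M d 1 := by
        rw [hPgen, hkm1, hmod]
        congr 1
        split_ifs <;> omega
      have e3 : vP (k + 1) = qq M d 1 := by
        rw [hPgen, hk1, hp1]
        congr 1
        split_ifs <;> omega
      have e0 : vL k = ∑ t ∈ Finset.Icc 1 M, 2 * d t := by
        simp only [hvL]
        rw [if_pos c0]
      rw [e0, e1, e2, e3]
      have hs := qstep M d 0
      norm_num at hs
      have hmul : ∑ t ∈ Finset.Icc 1 M, 2 * d t = 2 * ∑ t ∈ Finset.Icc 1 M, d t := by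
        rw [Finset.mul_sum]
      linarith
    · by_cases c1 : k.val ≤ M
      · have e1 : vP k = qq M d k.val := by rw [hPgen]; congr 1; omega
        have e2 : vP (k - 1) = qq M d (k.val - 1) := by
          rw [hPgen, hkm1, hmod]
          congr 1
          split_ifs <;> omega
        have e3 : vP (k + 1) = qq M d (k.val + 1) := by
          rw [hPgen, hk1, hp1, if_neg (show ¬ k.val + 1 = N by omega)]
          by_cases cM : k.val = M
          · rw [qzero M d (min (k.val + 1) (N - (k.val + 1))) (by omega),
              qzero M d (k.val + 1) (by omega)]
          · congr 1; omega
        have e0 : vL k = -d k.val := by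
          simp only [hvL]
          rw [if_neg c0, if_pos c1]
        rw [e0, e1, e2, e3]
        have hs := qsecond M d k.val (by omega) c1
        linarith
      · by_cases c2 : N - k.val ≤ M
        · have e1 : vP k = qq M d (N - k.val) := by rw [hPgen]; congr 1; omega
          have e2 : vP (k - 1) = qq M d (N - k.val + 1) := by
            rw [hPgen, hkm1, hmod, if_pos (show 1 ≤ k.val by omega)]
            by_cases hc : N - k.val + 1 ≤ k.val - 1
            · congr 1; omega
            · rw [qzero M d (min (k.val - 1) (N - (k.val - 1))) (by omega),
                qzero M d (N - k.val + 1) (by omega)]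
          have e3 : vP (k + 1) = qq M d (N - k.val - 1) := by
            rw [hPgen, hk1, hp1]
            by_cases hNend : k.val + 1 = N
            · rw [if_pos hNend]; congr 1; omega
            · rw [if_neg hNend]; congr 1; omega
          have e0 : vL k = -d (N - k.val) := by
            simp only [hvL]
            rw [if_neg c0, if_neg c1, if_pos c2]
          rw [e0, e1, e2, e3]
          have hs := qsecond M d (N - k.val) (by omega) c2
          linarith
        · have e1 : vP k = 0 := by rw [hPgen]; exact qzero M d _ (by omega)
          have e2 : vP (k - 1) = 0 := by
            rw [hPgen, hkm1, hmod, if_pos (show 1 ≤ k.val by omega)]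
            exact qzero M d _ (by omega)
          have e3 : vP (k + 1) = 0 := by
            rw [hPgen, hk1, hp1, if_neg (show ¬ k.val + 1 = N by omega)]
            exact qzero M d _ (by omega)
          have e0 : vL k = 0 := by
            simp only [hvL]
            rw [if_neg c0, if_neg c1, if_neg c2]
          rw [e0, e1, e2, e3]
          ring
  -- disequalities between the special elements of Fin N
  have ne01 : (0 : Fin N) ≠ 1 := fun h => by
    have hh := congrArg Fin.val h
    rw [h0v, hv1] at hh
    omega
  have ne0m1 : (0 : Fin N) ≠ -1 := fun h => by
    have hh := congrArg Fin.val h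
    rw [h0v, hvm1] at hh
    omega
  have ne1m1 : (1 : Fin N) ≠ -1 := fun h => by
    have hh := congrArg Fin.val h
    rw [hv1, hvm1] at hh
    omega
  -- the product identity
  have hprod : L = P * LC := by
    rw [hLc, hPc, hLCc, Matrix.circulant_mul]
    apply congrArg
    funext k
    have hterm : ∀ j : Fin N, vP (k - j) * vLC j =
        (if j = 0 then 2 * vP k else 0) + (if j = 1 then -vP (k - 1) else 0)
          + (if j = (-1 : Fin N) then -vP (k + 1) else 0) := by
      intro j
      simp only [hvLC]
      by_cases h0 : j.val = 0
      · have hj0 : j = 0 := Fin.ext (by rw [h0, h0v])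
        subst hj0
        rw [if_pos h0, if_pos rfl, if_neg ne01, if_neg ne0m1, sub_zero]
        ring
      · by_cases h1 : j.val = 1
        · have hj1 : j = 1 := Fin.ext (by rw [h1, hv1])
          subst hj1
          rw [if_neg h0, if_pos h1, if_neg (Ne.symm ne01), if_pos rfl, if_neg ne1m1]
          ring
        · by_cases hm : j.val = N - 1
          · have hjm : j = -1 := Fin.ext (by rw [hm, hvm1])
            subst hjm
            rw [if_neg h0, if_neg h1, if_pos hm, if_neg (Ne.symm ne0m1),
              if_neg (Ne.symm ne1m1), if_pos rfl, sub_neg_eq_add]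
            ring
          · rw [if_neg h0, if_neg h1, if_neg hm,
              if_neg (show j ≠ 0 from fun h => h0 (by rw [h]; exact h0v)),
              if_neg (show j ≠ 1 from fun h => h1 (by rw [h]; exact hv1)),
              if_neg (show j ≠ -1 from fun h => hm (by rw [h]; exact hvm1))]
            ring
    have hmv : (Matrix.circulant vP *ᵥ vLC) k = ∑ j : Fin N, vP (k - j) * vLC j := by
      simp [Matrix.mulVec, dotProduct, Matrix.circulant_apply]
    rw [hmv, Finset.sum_congr rfl (fun j _ => hterm j), Finset.sum_add_distrib,
      Finset.sum_add_distrib,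
      Finset.sum_ite_eq' Finset.univ (0 : Fin N) (fun _ => 2 * vP k),
      Finset.sum_ite_eq' Finset.univ (1 : Fin N) (fun _ => -vP (k - 1)),
      Finset.sum_ite_eq' Finset.univ (-1 : Fin N) (fun _ => -vP (k + 1)),
      if_pos (Finset.mem_univ _), if_pos (Finset.mem_univ _), if_pos (Finset.mem_univ _)]
    exact hkey k
  -- positive definiteness
  set AM : ℕ → Matrix (Fin N) (Fin N) ℝ :=
    fun t => Matrix.circulant (fun k : Fin N => if k.val < t then (1:ℝ) else 0) with hAM
  have hBent : ∀ t, t ≤ M → ∀ i j : Fin N,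
      ((AM t)ᴴ * AM t) i j = ((t - min ((i - j).val) (N - (i - j).val) : ℕ) : ℝ) := by
    intro t ht i j
    have hstep1 : ((AM t)ᴴ * AM t) i j
        = ∑ kk : Fin N, (if (kk - i).val < t then (1:ℝ) else 0)
            * (if (kk - j).val < t then (1:ℝ) else 0) := by
      simp only [hAM, Matrix.mul_apply, Matrix.conjTranspose_apply, Matrix.circulant_apply]
      apply Finset.sum_congr rfl
      intro kk _
      rw [star_trivial]
    have hstep2 : ∑ kk : Fin N, (if (kk - i).val < t then (1:ℝ) else 0)
            * (if (kk - j).val < t then (1:ℝ) else 0)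
        = ∑ r : Fin N, (if r.val < t then (1:ℝ) else 0)
            * (if (r.val + (i - j).val) % N < t then (1:ℝ) else 0) := by
      apply Fintype.sum_equiv (Equiv.subRight i)
      intro kk
      have hval : ((kk - i).val + (i - j).val) % N = (kk - j).val := by
        rw [show ((kk - i).val + (i - j).val) % N = ((kk - i) + (i - j)).val from
          (congrArg Fin.val (Fin.add_def _ _)).symm, sub_add_sub_cancel]
      simp only [Equiv.subRight_apply]
      simp only [hval]
    have hstep3 : ∑ r : Fin N, (if r.val < t then (1:ℝ) else 0)
            * (if (r.val + (i - j).val) % N < t then (1:ℝ) else 0)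
        = ∑ m ∈ Finset.range N, (if m < t then (1:ℝ) else 0)
            * (if (m + (i - j).val) % N < t then (1:ℝ) else 0) :=
      Fin.sum_univ_eq_sum_range
        (fun m => (if m < t then (1:ℝ) else 0) * (if (m + (i - j).val) % N < t then (1:ℝ) else 0)) N
    have hstep4 : ∑ m ∈ Finset.range N, (if m < t then (1:ℝ) else 0)
            * (if (m + (i - j).val) % N < t then (1:ℝ) else 0)
        = ∑ m ∈ Finset.range t, (if (m + (i - j).val) % N < t then (1:ℝ) else 0) := by
      rw [← Finset.sum_subset (Finset.range_subset_range.mpr (show t ≤ N by omega))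
        (fun x _ hx => by
          rw [if_neg (fun hlt => hx (Finset.mem_range.mpr hlt)), zero_mul])]
      apply Finset.sum_congr rfl
      intro x hx
      rw [if_pos (Finset.mem_range.mp hx), one_mul]
    rw [hstep1, hstep2, hstep3, hstep4]
    exact countLem hM2 t ((i - j).val) ht (i - j).isLt
  -- decomposition of P
  have hPdecomp : P = Matrix.diagonal (fun _ : Fin N => d 1)
      + ∑ t ∈ Finset.Icc 2 M, d t • ((AM t)ᴴ * AM t) := by
    ext i j
    rw [Matrix.add_apply, Matrix.diagonal_apply, Matrix.sum_apply]
    have hi := i.isLt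
    have hj := j.isLt
    have hA := modsub (N := N) j.val i.val hj hi
    have hB := modsub (N := N) i.val j.val hi hj
    have hsc : ∀ t ∈ Finset.Icc 2 M, (d t • ((AM t)ᴴ * AM t)) i j
        = d t * ((t - min ((i.val + N - j.val) % N) (N - (i.val + N - j.val) % N) : ℕ) : ℝ) := by
      intro t ht
      simp only [Finset.mem_Icc] at ht
      rw [Matrix.smul_apply, hBent t (by omega) i j, smul_eq_mul, hsub i j]
    rw [Finset.sum_congr rfl hsc, hP]
    by_cases hij : i = j
    · have hv : i.val = j.val := by rw [hij]
      have h0 : (i.val + N - j.val) % N = 0 := by rw [hB]; split_ifs <;> omega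
      rw [if_pos hij, if_pos hij, h0]
      have hterm2 : ∀ t ∈ Finset.Icc 2 M, d t * ((t - min 0 (N - 0) : ℕ) : ℝ) = (t:ℝ) * d t := by
        intro t ht
        have hz : t - min 0 (N - 0) = t := by omega
        rw [hz]
        ring
      rw [Finset.sum_congr rfl hterm2]
      have hins : Finset.Icc 1 M = insert 1 (Finset.Icc 2 M) := by
        ext x
        simp only [Finset.mem_Icc, Finset.mem_insert]
        omega
      rw [hins, Finset.sum_insert (by simp only [Finset.mem_Icc]; omega)]
      push_cast
      ring
    · have hvne : i.val ≠ j.val := fun h => hij (Fin.ext h)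
      have hab : (j.val + N - i.val) % N + (i.val + N - j.val) % N = N := by
        rw [hA, hB]; split_ifs <;> omega
      have ha0 : (j.val + N - i.val) % N ≠ 0 := by rw [hA]; split_ifs <;> omega
      have hb0 : (i.val + N - j.val) % N ≠ 0 := by rw [hB]; split_ifs <;> omega
      rw [if_neg hij, if_neg hij, zero_add]
      have hNb : N - (i.val + N - j.val) % N = (j.val + N - i.val) % N := by omega
      have hmain : ∀ e : ℕ, 1 ≤ e →
          ∑ t ∈ Finset.Icc 2 M, d t * ((t - e : ℕ) : ℝ)
            = ∑ t ∈ Finset.Icc (e + 1) M, ((t:ℝ) - (e:ℝ)) * d t := by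
        intro e he
        rw [← Finset.sum_subset (show Finset.Icc (e+1) M ⊆ Finset.Icc 2 M from by
            intro x hx
            simp only [Finset.mem_Icc] at *
            omega)
          (fun x hx hnx => by
            simp only [Finset.mem_Icc] at hx hnx
            have hz : x - e = 0 := by omega
            rw [hz]
            simp)]
        apply Finset.sum_congr rfl
        intro x hx
        simp only [Finset.mem_Icc] at hx
        rw [Nat.cast_sub (by omega)]
        ring
      rw [hNb]
      by_cases h1 : (j.val + N - i.val) % N ≤ M - 1
      · rw [if_pos h1]
        have hminc : ∀ t ∈ Finset.Icc 2 M,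
            d t * ((t - min ((i.val + N - j.val) % N) ((j.val + N - i.val) % N) : ℕ) : ℝ)
              = d t * ((t - (j.val + N - i.val) % N : ℕ) : ℝ) := by
          intro t ht
          have hz : min ((i.val + N - j.val) % N) ((j.val + N - i.val) % N)
              = (j.val + N - i.val) % N := by omega
          rw [hz]
        rw [Finset.sum_congr rfl hminc, hmain _ (by omega)]
      · rw [if_neg h1]
        by_cases h2 : (i.val + N - j.val) % N ≤ M - 1
        · rw [if_pos h2]
          have hminc : ∀ t ∈ Finset.Icc 2 M,
              d t * ((t - min ((i.val + N - j.val) % N) ((j.val + N - i.val) % N) : ℕ) : ℝ)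
                = d t * ((t - (i.val + N - j.val) % N : ℕ) : ℝ) := by
            intro t ht
            have hz : min ((i.val + N - j.val) % N) ((j.val + N - i.val) % N)
                = (i.val + N - j.val) % N := by omega
            rw [hz]
          rw [Finset.sum_congr rfl hminc, hmain _ (by omega)]
        · rw [if_neg h2]
          refine (Finset.sum_eq_zero ?_).symm
          intro t ht
          simp only [Finset.mem_Icc] at ht
          have hz : t - min ((i.val + N - j.val) % N) ((j.val + N - i.val) % N) = 0 := by omega
          rw [hz]
          simp
  have hPSD : P.PosDef := by
    rw [hPdecomp]
    apply Matrix.PosDef.add_posSemidef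
    · exact Matrix.PosDef.diagonal (fun _ => hd1)
    · apply psd_sum
      intro t ht
      simp only [Finset.mem_Icc] at ht
      exact psd_smul (Matrix.posSemidef_conjTranspose_mul_self (AM t))
        (hd t (by simp only [Finset.mem_Icc]; omega))
  exact ⟨hprod, hPSD⟩
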